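/- Let X be a biquandle and Q(X) its associated quandle with a * b := (a ub b) ob⁻¹ b. Then for each y ∈ X, the right translation x ↦ x ob y is an automorphism of the quandle Q(X); i.e., it is a bijection of X and (a * b) ob y = (a ob y) * (b ob y) for all a, b ∈ X. Consequently, for every g ∈ As(X), the map x ↦ x ⋄ g (the right As(X)-action with x ⋄ ι'(y) = x ob y) is a quandle automorphism of Q(X). -/

import Mathlib

/-- A biquandle: a set with two binary operations `ub` (under) and `ob` (over)
satisfying the biquandle axioms (BQ1), (BQ2), (BQ3). -/
structure Biquandle (X : Type*) where
  ub : X → X → X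
  ob : X → X → X
  bq1 : ∀ x, ub x x = ob x x
  ub_bij : ∀ y, Function.Bijective fun x => ub x y
  ob_bij : ∀ y, Function.Bijective fun x => ob x y
  H_bij : Function.Bijective fun p : X × X => (ob p.2 p.1, ub p.1 p.2)
  bq3_ub : ∀ x y z, ub (ub x y) (ub z y) = ub (ub x z) (ob y z)
  bq3_ob : ∀ x y z, ob (ob x y) (ob z y) = ob (ob x z) (ub y z)
  bq3_mix : ∀ x y z, ob (ub x y) (ub z y) = ub (ob x z) (ob y z)

/-- The inverse right translation `ub⁻¹`: `ubInv x y` is the unique `z` with `ub z y = x`. -/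
noncomputable def Biquandle.ubInv {X : Type*} (B : Biquandle X) (x y : X) : X :=
  (Equiv.ofBijective _ (B.ub_bij y)).symm x

/-- The inverse right translation `ob⁻¹`: `obInv x y` is the unique `z` with `ob z y = x`. -/
noncomputable def Biquandle.obInv {X : Type*} (B : Biquandle X) (x y : X) : X :=
  (Equiv.ofBijective _ (B.ob_bij y)).symm x

/-- The quandle operation of `Q(X)`: `a * b := (a ub b) ob⁻¹ b`. -/
noncomputable def Biquandle.q {X : Type*} (B : Biquandle X) (a b : X) : X :=
  B.obInv (B.ub a b) b

/-- Relations of the associated group `As(X)` of a biquandle: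
`x · (y ob x) = y · (x ub y)`. -/
def Biquandle.asRels {X : Type*} (B : Biquandle X) : Set (FreeGroup X) :=
  {r | ∃ x y : X, r = FreeGroup.of x * FreeGroup.of (B.ob y x) *
      (FreeGroup.of y * FreeGroup.of (B.ub x y))⁻¹}

/-- Relations of the associated group `As(Q(X))` of the quandle `Q(X)`:
`x · y = y · (x * y)`. -/
def Biquandle.qRels {X : Type*} (B : Biquandle X) : Set (FreeGroup X) :=
  {r | ∃ a b : X, r = FreeGroup.of a * FreeGroup.of b *
      (FreeGroup.of b * FreeGroup.of (B.q a b))⁻¹}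


lemma Biquandle.ob_obInv {X : Type*} (B : Biquandle X) (x y : X) :
    B.ob (B.obInv x y) y = x :=
  (Equiv.ofBijective _ (B.ob_bij y)).apply_symm_apply x

lemma Biquandle.ob_q_key {X : Type*} (B : Biquandle X) (y a b : X) :
    B.ob (B.q a b) y = B.q (B.ob a y) (B.ob b y) := by
  apply (B.ob_bij (B.ob b y)).injective
  show B.ob (B.ob (B.q a b) y) (B.ob b y) = B.ob (B.q (B.ob a y) (B.ob b y)) (B.ob b y)
  have hq : ∀ u v : X, B.ob (B.q u v) v = B.ub u v := fun u v => B.ob_obInv _ _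
  rw [B.bq3_ob, hq, hq, B.bq3_mix]

/-- For each `y`, the right translation `x ↦ x ob y` is an automorphism of the
quandle `Q(X)`; consequently, for every `g ∈ As(X)`, the map `x ↦ x ⋄ g` of the right
`As(X)`-action `⋄` (with `x ⋄ ι'(y) = x ob y`) is a quandle automorphism of `Q(X)`. -/
theorem ob_quandle_automorphism {X : Type*} (B : Biquandle X) :
    (∀ y : X, Function.Bijective (fun x => B.ob x y) ∧
      ∀ a b : X, B.ob (B.q a b) y = B.q (B.ob a y) (B.ob b y)) ∧
    (∀ act : X → PresentedGroup B.asRels → X,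
      (∀ x : X, act x 1 = x) →
      (∀ (x : X) (g h : PresentedGroup B.asRels), act x (g * h) = act (act x g) h) →
      (∀ x y : X, act x (PresentedGroup.of y) = B.ob x y) →
      ∀ g : PresentedGroup B.asRels, Function.Bijective (fun x => act x g) ∧
        ∀ a b : X, act (B.q a b) g = B.q (act a g) (act b g)) := by
  constructor
  · exact fun y => ⟨B.ob_bij y, fun a b => B.ob_q_key y a b⟩
  · intro act h1 hmul hof g
    have P1 : Function.Bijective (fun x => act x (1 : PresentedGroup B.asRels)) ∧
        ∀ a b : X, act (B.q a b) 1 = B.q (act a 1) (act b 1) := by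
      constructor
      · simp only [h1]; exact Function.bijective_id
      · intro a b; simp [h1]
    have Pmul : ∀ g h : PresentedGroup B.asRels,
        (Function.Bijective (fun x => act x g) ∧
          ∀ a b : X, act (B.q a b) g = B.q (act a g) (act b g)) →
        (Function.Bijective (fun x => act x h) ∧
          ∀ a b : X, act (B.q a b) h = B.q (act a h) (act b h)) →
        Function.Bijective (fun x => act x (g * h)) ∧
          ∀ a b : X, act (B.q a b) (g * h) = B.q (act a (g * h)) (act b (g * h)) := by
      intro g h ⟨hg, hg2⟩ ⟨hh, hh2⟩
      constructor
      · have : (fun x => act x (g * h)) = (fun x => act x h) ∘ (fun x => act x g) := by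
          funext x; simp [hmul]
        rw [this]; exact hh.comp hg
      · intro a b; simp [hmul, hg2, hh2]
    have Pinv : ∀ g : PresentedGroup B.asRels,
        (Function.Bijective (fun x => act x g) ∧
          ∀ a b : X, act (B.q a b) g = B.q (act a g) (act b g)) →
        Function.Bijective (fun x => act x g⁻¹) ∧
          ∀ a b : X, act (B.q a b) g⁻¹ = B.q (act a g⁻¹) (act b g⁻¹) := by
      intro g ⟨hg, hg2⟩
      have hli : Function.LeftInverse (fun x => act x g⁻¹) (fun x => act x g) := by
        intro x; simp [← hmul, h1]
      have hri : Function.RightInverse (fun x => act x g⁻¹) (fun x => act x g) := by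
        intro x; simp [← hmul, h1]
      have hbij : Function.Bijective (fun x => act x g⁻¹) := ⟨hri.injective, hli.surjective⟩
      refine ⟨hbij, fun a b => hg.injective ?_⟩
      show act (act (B.q a b) g⁻¹) g = act (B.q (act a g⁻¹) (act b g⁻¹)) g
      rw [← hmul, inv_mul_cancel, h1, hg2, ← hmul, ← hmul, inv_mul_cancel, h1, h1]
    have Pof : ∀ y : X, Function.Bijective (fun x => act x (PresentedGroup.of y)) ∧
        ∀ a b : X, act (B.q a b) (PresentedGroup.of y)
          = B.q (act a (PresentedGroup.of y)) (act b (PresentedGroup.of y)) := by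
      intro y
      constructor
      · simpa [hof] using B.ob_bij y
      · intro a b; simp only [hof]; exact B.ob_q_key y a b
    induction g using QuotientGroup.induction_on with
    | _ w =>
      induction w using FreeGroup.induction_on with
      | C1 => exact P1
      | of y => exact Pof y
      | inv_of y _ => exact Pinv _ (Pof y)
      | mul u v hu hv => exact Pmul _ _ hu hv
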